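/- Let G = (V,E) be a finite connected simple graph and n(G) := |E| − |V| + 1. Then for every real ξ > 0, θ_G(1,ξ) = Σ_{k=0}^{n(G)} C(n(G), k) f_{2k}(ξ − ξ⁻¹), where C(n,k) is the binomial coefficient. -/

import Mathlib

set_option linter.unusedSectionVars false
set_option maxHeartbeats 1600000

/-- The polynomials `f_n` defined by `f_0 = 1`, `f_1 = 0`,
`f_{n+1}(x) = x f_n(x) + f_{n-1}(x)`. -/
def chebF : ℕ → ℝ → ℝ
  | 0, _ => 1
  | 1, _ => 0
  | n + 2, x => x * chebF (n + 1) x + chebF n x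

/-- `deg ep1 ep2 i s` is the number of edges in `s` incident to the node `i`. -/
def deg {V E : Type} [DecidableEq V] [DecidableEq E] (ep1 ep2 : E → V) (i : V)
    (s : Finset E) : ℕ :=
  (s.filter fun e => ep1 e = i ∨ ep2 e = i).card

/-- The graph polynomial `θ_G(β,ξ) = Σ_{s ⊆ E} β^{|s|} Π_{i∈V} f_{d_i(s)}(ξ - ξ⁻¹)`. -/
noncomputable def theta {V E : Type} [Fintype V] [DecidableEq V] [Fintype E] [DecidableEq E]
    (ep1 ep2 : E → V) (β ξ : ℝ) : ℝ :=
  ∑ s : Finset E, β ^ s.card * ∏ i : V, chebF (deg ep1 ep2 i s) (ξ - ξ⁻¹)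

section helpers

variable {ξ : ℝ}

lemma chebF_formula (hξ : ξ ≠ 0) (n : ℕ) :
    (ξ + ξ⁻¹) * chebF n (ξ - ξ⁻¹) * ξ ^ (n+1) = ξ ^ (2*n) + (-1)^n * ξ^2 := by
  have hinv : ξ⁻¹ * ξ = 1 := inv_mul_cancel₀ hξ
  induction n using Nat.twoStepInduction with
  | zero => show (ξ + ξ⁻¹) * 1 * ξ ^ 1 = ξ ^ 0 + (-1)^0 * ξ^2; field_simp; ring
  | one => show (ξ + ξ⁻¹) * 0 * ξ ^ 2 = ξ ^ 2 + (-1)^1 * ξ^2; ring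
  | more n h0 h1 =>
    show (ξ + ξ⁻¹) * ((ξ - ξ⁻¹) * chebF (n+1) (ξ - ξ⁻¹) + chebF n (ξ - ξ⁻¹)) * ξ ^ (n+3)
      = ξ ^ (2*(n+2)) + (-1)^(n+2) * ξ^2
    linear_combination ((ξ - ξ⁻¹) * ξ) * h1 + ξ^2 * h0 +
      ((ξ + ξ⁻¹) * (chebF (n+1) (ξ - ξ⁻¹)) * ξ^(n+2) - (-1)^(n+1)*ξ^2 - ξ^(2*n+2)
       - (ξ^2*ξ^n*ξ⁻¹ + ξ^3*ξ^n) * chebF (n+1) (ξ - ξ⁻¹)) * hinv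

lemma xi_add_inv_ne_zero (hξ : ξ ≠ 0) : ξ + ξ⁻¹ ≠ 0 := by
  intro h
  have h2 : ξ * ξ + 1 = 0 := by
    have := congrArg (· * ξ) h
    simpa [add_mul, inv_mul_cancel₀ hξ] using this
  nlinarith

lemma sum_prod_subsets {E : Type} [Fintype E] [DecidableEq E] (u : E → ℝ) :
    ∑ s : Finset E, ∏ e ∈ s, u e = ∏ e : E, (u e + 1) := by
  rw [Finset.prod_add]
  simp [← Finset.powerset_univ]

lemma myDivHelper (C : ℝ) (hξ : ξ ≠ 0) (hC : C ≠ 0) (v : ℕ) (k : ℕ) (X : ℝ) :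
    X / (C^v * ξ^(2*k+v)) = (C^v * ξ^v)⁻¹ * (X * ((ξ⁻¹^2)^k)) := by
  have r3 : (ξ⁻¹^2)^k = ((ξ^2)^k)⁻¹ := by rw [inv_pow, inv_pow]
  rw [r3, pow_add, pow_mul]
  have hA : (ξ^2)^k ≠ 0 := by positivity
  have hB : ξ^v ≠ 0 := pow_ne_zero _ hξ
  have hD : C^v ≠ 0 := pow_ne_zero _ hC
  field_simp

lemma rhsHelper (hξ : ξ ≠ 0) (k : ℕ) :
    (ξ^(2*(2*k)) + ξ^2) / ((ξ+ξ⁻¹)*ξ^(2*k+1)) =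
      ((ξ+ξ⁻¹)*ξ)⁻¹ * ((ξ^2)^k + ξ^2 * (ξ⁻¹^2)^k) := by
  have hd : (ξ+ξ⁻¹)*ξ = ξ^2+1 := by field_simp
  have hD : ξ^2+1 ≠ 0 := by positivity
  have key : ∀ A : ℝ, A ≠ 0 → (A^2 + ξ^2)/((ξ^2+1)*A) =
      (ξ^2+1)⁻¹ * (A + ξ^2 * A⁻¹) := by
    intro A hA
    field_simp
  have r1 : ξ^(2*(2*k)) = ((ξ^2)^k)^2 := by
    rw [← pow_mul, ← pow_mul]; congr 1; ring
  have r2 : (ξ+ξ⁻¹)*ξ^(2*k+1) = (ξ^2+1)*(ξ^2)^k := by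
    rw [pow_add, pow_mul, pow_one, ← mul_assoc, mul_comm (ξ+ξ⁻¹) ((ξ^2)^k), mul_assoc, hd]
    ring
  have r3 : (ξ⁻¹^2)^k = ((ξ^2)^k)⁻¹ := by rw [inv_pow, inv_pow]
  rw [r1, r2, r3, hd]
  exact key _ (by positivity)

lemma finalHelper (C : ℝ) (hC : C = ξ + ξ⁻¹) (hξ : ξ ≠ 0) (n w : ℕ) :
    (C^(w+1) * ξ^(w+1))⁻¹ * (ξ^(2*(w+1)) * (ξ⁻¹^2+1)^(n+w) + (ξ^2+1)^(n+w)) =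
      (C*ξ)⁻¹ * ((ξ^2+1)^n + ξ^2 * (ξ⁻¹^2+1)^n) := by
  have h1 : ξ⁻¹^2+1 = (ξ^2+1) * (ξ^2)⁻¹ := by field_simp; ring
  have h2 : C = (ξ^2+1) * ξ⁻¹ := by rw [hC]; field_simp
  rw [h1, h2, pow_mul' ξ 2 (w+1)]
  simp only [mul_pow, pow_add, pow_succ, pow_one, inv_pow, pow_zero, one_mul, one_pow, mul_one]
  have hq : ξ * ξ + 1 ≠ 0 := by nlinarith [mul_self_nonneg ξ]
  generalize hD2 : ξ * ξ + 1 = D at *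
  have hU : D^n ≠ 0 := pow_ne_zero _ hq
  have hW : D^w ≠ 0 := pow_ne_zero _ hq
  have hX : ξ^n ≠ 0 := pow_ne_zero _ hξ
  have hY : ξ^w ≠ 0 := pow_ne_zero _ hξ
  generalize ξ^n = X at *
  generalize ξ^w = Y at *
  generalize D^n = U at *
  generalize D^w = W at *
  field_simp
  ring

end helpers

section graphhelpers

variable {V E : Type} [Fintype V] [DecidableEq V] [Fintype E] [DecidableEq E]
  (ep1 ep2 : E → V)

lemma sum_deg (hloop : ∀ e, ep1 e ≠ ep2 e) (T : Finset V) (s : Finset E) :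
    ∑ i ∈ T, deg ep1 ep2 i s
      = ∑ e ∈ s, ((if ep1 e ∈ T then 1 else 0) + (if ep2 e ∈ T then 1 else 0)) := by
  have h1 : ∀ i ∈ T, deg ep1 ep2 i s
      = ∑ e ∈ s, (if ep1 e = i ∨ ep2 e = i then 1 else 0) := by
    intro i _
    rw [deg, Finset.card_filter]
  rw [Finset.sum_congr rfl h1, Finset.sum_comm]
  refine Finset.sum_congr rfl fun e _ => ?_
  have key : ∀ i ∈ T, (if ep1 e = i ∨ ep2 e = i then (1:ℕ) else 0)
      = (if ep1 e = i then 1 else 0) + (if ep2 e = i then 1 else 0) := by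
    intro i _
    by_cases h1 : ep1 e = i <;> by_cases h2 : ep2 e = i
    · exact absurd (h1.trans h2.symm) (hloop e)
    all_goals simp_all
  rw [Finset.sum_congr rfl key, Finset.sum_add_distrib,
    Finset.sum_ite_eq T (ep1 e) (fun _ => 1), Finset.sum_ite_eq T (ep2 e) (fun _ => 1)]

lemma handshake (hloop : ∀ e, ep1 e ≠ ep2 e) (s : Finset E) :
    ∑ i : V, deg ep1 ep2 i s = 2 * s.card := by
  rw [sum_deg ep1 ep2 hloop Finset.univ s]
  simp [two_mul, mul_comm]

lemma crossing_edge
    (hconn : (SimpleGraph.fromRel fun a b => ∃ e, ep1 e = a ∧ ep2 e = b).Connected)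
    (T : Finset V) (hT1 : T ≠ ∅) (hT2 : T ≠ Finset.univ) :
    ∃ e, (ep1 e ∈ T ∧ ep2 e ∉ T) ∨ (ep1 e ∉ T ∧ ep2 e ∈ T) := by
  set G := (SimpleGraph.fromRel fun a b => ∃ e, ep1 e = a ∧ ep2 e = b) with hG
  obtain ⟨a, ha⟩ := Finset.nonempty_iff_ne_empty.2 hT1
  have : ∃ b, b ∉ T := by
    by_contra h
    push_neg at h
    exact hT2 (Finset.eq_univ_iff_forall.2 h)
  obtain ⟨b, hb⟩ := this
  obtain ⟨p⟩ := hconn.preconnected a b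
  clear hT1 hT2
  induction p with
  | nil => exact absurd ha hb
  | @cons a c b h q ih =>
    by_cases hc : c ∈ T
    · exact ih hc hb
    · rw [hG, SimpleGraph.fromRel_adj] at h
      obtain ⟨-, ⟨e, he1, he2⟩ | ⟨e, he1, he2⟩⟩ := h
      · exact ⟨e, Or.inl ⟨he1 ▸ ha, he2 ▸ hc⟩⟩
      · exact ⟨e, Or.inr ⟨he1 ▸ hc, he2 ▸ ha⟩⟩

lemma card_V_le
    (hconn : (SimpleGraph.fromRel fun a b => ∃ e, ep1 e = a ∧ ep2 e = b).Connected) :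
    Fintype.card V ≤ Fintype.card E + 1 := by
  classical
  set G := (SimpleGraph.fromRel fun a b => ∃ e, ep1 e = a ∧ ep2 e = b) with hG
  obtain ⟨r⟩ := hconn.nonempty
  have key : ∀ i : V, i ≠ r → ∃ e,
      (ep1 e = i ∧ G.dist (ep2 e) r + 1 = G.dist i r) ∨
      (ep2 e = i ∧ G.dist (ep1 e) r + 1 = G.dist i r) := by
    intro i hi
    have hd : G.dist i r ≠ 0 := fun h => hi ((hconn.dist_eq_zero_iff).1 h)
    obtain ⟨p, hp⟩ := hconn.exists_walk_length_eq_dist i r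
    cases p with
    | nil => exact absurd rfl hi
    | @cons _ c _ h q =>
      have hq : G.dist c r ≤ q.length := SimpleGraph.dist_le q
      have hlen : q.length + 1 = G.dist i r := by
        simpa [SimpleGraph.Walk.length_cons] using hp
      obtain ⟨q', hq'⟩ := hconn.exists_walk_length_eq_dist c r
      have h2 : G.dist i r ≤ G.dist c r + 1 := by
        have := SimpleGraph.dist_le (SimpleGraph.Walk.cons h q')
        simpa [SimpleGraph.Walk.length_cons, hq'] using this
      have hdc : G.dist c r + 1 = G.dist i r := by omega
      rw [hG, SimpleGraph.fromRel_adj] at h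
      obtain ⟨-, ⟨e, he1, he2⟩ | ⟨e, he1, he2⟩⟩ := h
      · exact ⟨e, Or.inl ⟨he1, by rw [he2]; exact hdc⟩⟩
      · exact ⟨e, Or.inr ⟨he2, by rw [he1]; exact hdc⟩⟩
  choose f hf using fun (i : {i : V // i ≠ r}) => key i.1 i.2
  have hinj : Function.Injective f := by
    intro i j hij
    by_contra hne
    have hij' : (i : V) ≠ (j : V) := fun h => hne (Subtype.ext h)
    obtain hi | hi := hf i <;> obtain hj | hj := hf j <;> rw [hij] at hi
    · exact hij' (hi.1.symm.trans hj.1)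
    · have h1 : G.dist (j:V) r + 1 = G.dist (i:V) r := by rw [← hj.1]; exact hi.2
      have h2 : G.dist (i:V) r + 1 = G.dist (j:V) r := by rw [← hi.1]; exact hj.2
      omega
    · have h1 : G.dist (j:V) r + 1 = G.dist (i:V) r := by rw [← hj.1]; exact hi.2
      have h2 : G.dist (i:V) r + 1 = G.dist (j:V) r := by rw [← hi.1]; exact hj.2
      omega
    · exact hij' (hi.1.symm.trans hj.1)
  have := Fintype.card_le_of_injective f hinj
  have hcard : Fintype.card {i : V // i ≠ r} = Fintype.card V - 1 := by
    simp [Fintype.card_subtype_compl]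
  have hpos : 1 ≤ Fintype.card V := Fintype.card_pos_iff.2 ⟨r⟩
  omega

end graphhelpers

theorem stmt_8 {V E : Type} [Fintype V] [DecidableEq V] [Fintype E] [DecidableEq E]
    -- a finite connected simple graph
    (ep1 ep2 : E → V)
    (hloop : ∀ e, ep1 e ≠ ep2 e)
    (hsimple : ∀ e e',
      (ep1 e = ep1 e' ∧ ep2 e = ep2 e') ∨ (ep1 e = ep2 e' ∧ ep2 e = ep1 e') → e = e')
    (hconn : (SimpleGraph.fromRel fun a b => ∃ e, ep1 e = a ∧ ep2 e = b).Connected)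
    (ξ : ℝ) (hξ : 0 < ξ) :
    -- `n(G) = |E| - |V| + 1`, here computed as `|E| + 1 - |V|` in ℕ
    theta ep1 ep2 1 ξ =
      ∑ k ∈ Finset.range (Fintype.card E + 1 - Fintype.card V + 1),
        (((Fintype.card E + 1 - Fintype.card V).choose k : ℝ)) *
          chebF (2 * k) (ξ - ξ⁻¹) := by
  classical
  have hξ0 : ξ ≠ 0 := ne_of_gt hξ
  have hinv : ξ⁻¹ * ξ = 1 := inv_mul_cancel₀ hξ0
  haveI : Nonempty V := hconn.nonempty
  set C := ξ + ξ⁻¹ with hCdef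
  have hC0 : C ≠ 0 := xi_add_inv_ne_zero hξ0
  set v := Fintype.card V with hv
  set m := Fintype.card E with hm
  have hv1 : 1 ≤ v := Fintype.card_pos
  have hmv : v ≤ m + 1 := card_V_le ep1 ep2 hconn
  set n := m + 1 - v with hn
  -- closed form for chebF
  have cheb : ∀ k : ℕ, chebF k (ξ - ξ⁻¹) = (ξ^(2*k) + (-1)^k * ξ^2) / (C * ξ^(k+1)) := by
    intro k
    rw [eq_div_iff (mul_ne_zero hC0 (pow_ne_zero _ hξ0))]
    linear_combination chebF_formula hξ0 k
  -- the weight function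
  set w : Finset V → E → ℝ :=
    fun T e => (if ep1 e ∈ T then -ξ^2 else 1) * (if ep2 e ∈ T then -ξ^2 else 1) with hwdef
  -- Step A+B: rewrite each summand
  have step1 : ∀ s : Finset E,
      ∏ i : V, chebF (deg ep1 ep2 i s) (ξ - ξ⁻¹)
        = (∑ T ∈ (Finset.univ : Finset V).powerset,
            ξ^(2*(v - T.card)) * ∏ e ∈ s, w T e) / (C^v * ξ^(2*s.card + v)) := by
    intro s
    have stepA : ∏ i : V, chebF (deg ep1 ep2 i s) (ξ - ξ⁻¹)
        = (∏ i : V, (ξ^(2*deg ep1 ep2 i s) + (-1)^(deg ep1 ep2 i s) * ξ^2))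
            / (C^v * ξ^(2*s.card + v)) := by
      simp only [cheb]
      rw [Finset.prod_div_distrib]
      congr 1
      rw [Finset.prod_mul_distrib, Finset.prod_const, Finset.card_univ, ← hv,
        Finset.prod_pow_eq_pow_sum]
      congr 1
      rw [Finset.sum_add_distrib, Finset.sum_const, Finset.card_univ, ← hv, smul_eq_mul,
        mul_one, handshake ep1 ep2 hloop s]
    rw [stepA]
    congr 1
    rw [Finset.prod_add]
    refine Finset.sum_congr rfl fun T hT => ?_
    have hTsub : T ⊆ Finset.univ := Finset.mem_powerset.1 hT
    have hsplit : (∑ i ∈ Finset.univ \ T, deg ep1 ep2 i s) + ∑ i ∈ T, deg ep1 ep2 i s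
        = 2 * s.card := by
      rw [Finset.sum_sdiff hTsub, handshake ep1 ep2 hloop s]
    have p1 : ∏ i ∈ T, ξ^(2*deg ep1 ep2 i s) = (ξ^2)^(∑ i ∈ T, deg ep1 ep2 i s) := by
      rw [← Finset.prod_pow_eq_pow_sum]
      exact Finset.prod_congr rfl fun i _ => pow_mul ξ 2 _
    have p2 : ∏ i ∈ Finset.univ \ T, ((-1:ℝ)^(deg ep1 ep2 i s) * ξ^2)
        = (-1)^(∑ i ∈ Finset.univ \ T, deg ep1 ep2 i s) * (ξ^2)^(v - T.card) := by
      rw [Finset.prod_mul_distrib, Finset.prod_pow_eq_pow_sum, Finset.prod_const,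
        Finset.card_sdiff_of_subset hTsub, Finset.card_univ, ← hv]
    have hsign : ((-1:ℝ))^(∑ i ∈ Finset.univ \ T, deg ep1 ep2 i s)
        = (-1)^(∑ i ∈ T, deg ep1 ep2 i s) := by
      have : (∑ i ∈ Finset.univ \ T, deg ep1 ep2 i s)
          + 2 * (∑ i ∈ T, deg ep1 ep2 i s)
          = 2 * s.card + (∑ i ∈ T, deg ep1 ep2 i s) := by omega
      have h1 : ((-1:ℝ))^((∑ i ∈ Finset.univ \ T, deg ep1 ep2 i s)
          + 2 * (∑ i ∈ T, deg ep1 ep2 i s))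
          = ((-1:ℝ))^(2 * s.card + (∑ i ∈ T, deg ep1 ep2 i s)) := by rw [this]
      rw [pow_add, pow_add, pow_mul, pow_mul] at h1
      simpa using h1
    have hprodw : ∏ e ∈ s, w T e = (-ξ^2)^(∑ i ∈ T, deg ep1 ep2 i s) := by
      rw [sum_deg ep1 ep2 hloop T s, ← Finset.prod_pow_eq_pow_sum]
      refine Finset.prod_congr rfl fun e _ => ?_
      by_cases h1 : ep1 e ∈ T <;> by_cases h2 : ep2 e ∈ T <;>
        simp only [hwdef, h1, h2, if_true, if_false, ite_true, ite_false] <;> ring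
    rw [p1, p2, hsign, hprodw, neg_pow, pow_mul]
    ring
  -- Step C: swap sums and factor over edges
  have step2 : theta ep1 ep2 1 ξ
      = ∑ T ∈ (Finset.univ : Finset V).powerset,
          (C^v * ξ^v)⁻¹ * (ξ^(2*(v - T.card)) * ∏ e : E, (w T e * ξ⁻¹^2 + 1)) := by
    rw [theta]
    simp only [one_pow, one_mul]
    calc ∑ s : Finset E, ∏ i : V, chebF (deg ep1 ep2 i s) (ξ - ξ⁻¹)
        = ∑ s : Finset E, ∑ T ∈ (Finset.univ : Finset V).powerset,
            (C^v * ξ^v)⁻¹ * (ξ^(2*(v - T.card)) * ∏ e ∈ s, (w T e * ξ⁻¹^2)) := by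
          refine Finset.sum_congr rfl fun s _ => ?_
          rw [step1 s, myDivHelper C hξ0 hC0 v s.card, Finset.sum_mul, Finset.mul_sum]
          refine Finset.sum_congr rfl fun T _ => ?_
          simp only [Finset.prod_mul_distrib, Finset.prod_const]
          ring
      _ = ∑ T ∈ (Finset.univ : Finset V).powerset,
            (C^v * ξ^v)⁻¹ * (ξ^(2*(v - T.card)) * ∏ e : E, (w T e * ξ⁻¹^2 + 1)) := by
          rw [Finset.sum_comm]
          refine Finset.sum_congr rfl fun T _ => ?_
          rw [← sum_prod_subsets (fun e => w T e * ξ⁻¹^2), ← Finset.mul_sum, ← Finset.mul_sum]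
  -- Step D: only the constant configurations survive
  rw [step2]
  have hvanish : ∀ T ∈ (Finset.univ : Finset V).powerset,
      T ∉ ({∅, Finset.univ} : Finset (Finset V)) →
      (C^v * ξ^v)⁻¹ * (ξ^(2*(v - T.card)) * ∏ e : E, (w T e * ξ⁻¹^2 + 1)) = 0 := by
    intro T _ hT
    simp only [Finset.mem_insert, Finset.mem_singleton] at hT
    push_neg at hT
    obtain ⟨e, he⟩ := crossing_edge ep1 ep2 hconn T hT.1.ne_empty hT.2
    have hzero : w T e * ξ⁻¹^2 + 1 = 0 := by
      obtain ⟨h1, h2⟩ | ⟨h1, h2⟩ := he <;>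
        simp only [hwdef, h1, h2, if_true, if_false, ite_true, ite_false] <;>
        linear_combination (-(1 + ξ⁻¹*ξ)) * hinv
    rw [Finset.prod_eq_zero (Finset.mem_univ e) hzero, mul_zero, mul_zero]
  have hsub : ({∅, Finset.univ} : Finset (Finset V)) ⊆ (Finset.univ : Finset V).powerset := by
    intro T hT
    simp only [Finset.mem_insert, Finset.mem_singleton] at hT
    rcases hT with rfl | rfl <;> simp
  rw [← Finset.sum_subset hsub (fun T h1 h2 => hvanish T h1 h2)]
  have hne : (∅ : Finset V) ≠ Finset.univ := Ne.symm Finset.univ_nonempty.ne_empty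
  rw [Finset.sum_pair hne]
  have hempty : ∀ e : E, w ∅ e * ξ⁻¹^2 + 1 = ξ⁻¹^2 + 1 := by
    intro e; simp [hwdef]
  have huniv : ∀ e : E, w Finset.univ e * ξ⁻¹^2 + 1 = ξ^2 + 1 := by
    intro e
    simp only [hwdef, Finset.mem_univ, if_true, ite_true]
    linear_combination (ξ^2*(ξ⁻¹*ξ+1))*hinv
  rw [Finset.prod_congr rfl fun e _ => hempty e, Finset.prod_congr rfl fun e _ => huniv e,
    Finset.prod_const, Finset.prod_const, Finset.card_univ, ← hm]
  simp only [Finset.card_empty, Finset.card_univ, ← hv, Nat.sub_zero, Nat.sub_self,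
    Nat.mul_zero, pow_zero]
  -- Step E: rewrite the RHS via the binomial theorem
  have rhs : ∑ k ∈ Finset.range (n+1), (n.choose k : ℝ) * chebF (2*k) (ξ - ξ⁻¹)
      = (C*ξ)⁻¹ * ((ξ^2+1)^n + ξ^2*(ξ⁻¹^2+1)^n) := by
    have per : ∀ k : ℕ, chebF (2*k) (ξ - ξ⁻¹) = (C*ξ)⁻¹ * ((ξ^2)^k + ξ^2*(ξ⁻¹^2)^k) := by
      intro k
      rw [cheb (2*k)]
      have hpow : ((-1:ℝ))^(2*k) = 1 := by rw [pow_mul]; simp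
      rw [hpow, one_mul, hCdef]
      exact rhsHelper hξ0 k
    simp only [per]
    have swap : ∑ k ∈ Finset.range (n+1),
        (n.choose k : ℝ) * ((C*ξ)⁻¹ * ((ξ^2)^k + ξ^2*(ξ⁻¹^2)^k))
        = (C*ξ)⁻¹ * ∑ k ∈ Finset.range (n+1),
            (n.choose k : ℝ) * ((ξ^2)^k + ξ^2*(ξ⁻¹^2)^k) := by
      rw [Finset.mul_sum]
      exact Finset.sum_congr rfl fun k _ => by ring
    rw [swap]
    congr 1
    have b1 : (ξ^2+1)^n = ∑ k ∈ Finset.range (n+1), (ξ^2)^k * (n.choose k : ℝ) := by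
      rw [add_pow]; simp
    have b2 : (ξ⁻¹^2+1)^n = ∑ k ∈ Finset.range (n+1), (ξ⁻¹^2)^k * (n.choose k : ℝ) := by
      rw [add_pow]; simp
    rw [b1, b2, Finset.mul_sum, ← Finset.sum_add_distrib]
    refine Finset.sum_congr rfl fun k _ => ?_
    ring
  rw [rhs]
  -- Step F: final algebraic identity
  obtain ⟨u, hu⟩ : ∃ u, v = u + 1 := ⟨v - 1, by omega⟩
  have hmn : m = n + u := by omega
  rw [hu, hmn]
  linear_combination finalHelper C hCdef hξ0 n u
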